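/- Let 𝔤 be a finite-dimensional real Lie algebra with an invariant inner product ⟨·,·⟩ (i.e. ⟨⁅z,x⁆,y⟩ + ⟨x,⁅z,y⁆⟩ = 0 for all x,y,z ∈ 𝔤). Let 𝔨 ⊆ 𝔤 be a Lie subalgebra and 𝔥 ⊆ 𝔨 an ideal of 𝔨; let 𝔪₀ be the orthogonal complement of 𝔥 in 𝔨, 𝔪′ the orthogonal complement of 𝔨 in 𝔤, and 𝔪 = 𝔪₀ ⊕ 𝔪′. Assume 𝔪′ is a nonzero irreducible 𝔨-module under the adjoint action, and assume neither 𝔥 nor 𝔪₀ is an ideal of 𝔤. If X ∈ 𝔪₀ satisfies ⁅X, v⁆ = 0 for all v ∈ 𝔪₀, then for every invariant inner product α on 𝔪 and every Z ∈ 𝔪 one has α(pr_𝔪⁅X,Z⁆, X) = 0; that is, X is a Riemannian equigeodesic vector. -/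

import Mathlib

/-- An invariant inner product on the subspace `𝔪` of the Lie algebra `L`, encoded as a
bilinear form on `L` which is symmetric and positive definite on `𝔪`, and `ad 𝔥`-invariant
on `𝔪`. -/
def IsInvariantInnerOn {L : Type*} [LieRing L] [LieAlgebra ℝ L]
    (𝔥 𝔪 : Submodule ℝ L) (α : L →ₗ[ℝ] L →ₗ[ℝ] ℝ) : Prop :=
  (∀ u ∈ 𝔪, ∀ v ∈ 𝔪, α u v = α v u) ∧
  (∀ u ∈ 𝔪, u ≠ 0 → 0 < α u u) ∧
  (∀ w ∈ 𝔥, ∀ u ∈ 𝔪, ∀ v ∈ 𝔪, α ⁅w, u⁆ v + α u ⁅w, v⁆ = 0)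

/-- With `𝔥 ⊆ 𝔨 ⊆ 𝔤`, `𝔥` an ideal of the subalgebra `𝔨`, `𝔪₀ = 𝔥ᗮ ∩ 𝔨`, `𝔪′ = 𝔨ᗮ`,
`𝔪 = 𝔪₀ ⊕ 𝔪′`, `𝔪′` a nonzero irreducible `𝔨`-module and neither `𝔥` nor `𝔪₀` an ideal
of `𝔤`: any `X ∈ 𝔪₀` with `⁅X, 𝔪₀⁆ = 0` satisfies the Kowalski–Vanhecke criterion
`α(pr_𝔪 ⁅X,Z⁆, X) = 0` for every invariant inner product `α` on `𝔪` and every `Z ∈ 𝔪`,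
i.e. `X` is a Riemannian equigeodesic vector. -/
theorem riemannian_equigeodesic_of_mem_center_of_m0
    {L : Type*} [LieRing L] [LieAlgebra ℝ L] [FiniteDimensional ℝ L]
    (B : L →ₗ[ℝ] L →ₗ[ℝ] ℝ)
    (hBsymm : ∀ x y : L, B x y = B y x)
    (hBpos : ∀ x : L, x ≠ 0 → 0 < B x x)
    (hBinv : ∀ x y z : L, B ⁅z, x⁆ y + B x ⁅z, y⁆ = 0)
    (𝔨 : Submodule ℝ L) (h𝔨 : ∀ x ∈ 𝔨, ∀ y ∈ 𝔨, ⁅x, y⁆ ∈ 𝔨)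
    (𝔥 : Submodule ℝ L) (h𝔥𝔨 : 𝔥 ≤ 𝔨)
    (h𝔥ideal : ∀ x ∈ 𝔨, ∀ y ∈ 𝔥, ⁅x, y⁆ ∈ 𝔥)
    (𝔪₀ : Submodule ℝ L)
    (h𝔪₀ : ∀ v : L, v ∈ 𝔪₀ ↔ v ∈ 𝔨 ∧ ∀ w ∈ 𝔥, B v w = 0)
    (𝔪' : Submodule ℝ L)
    (h𝔪' : ∀ v : L, v ∈ 𝔪' ↔ ∀ w ∈ 𝔨, B v w = 0)
    (𝔪 : Submodule ℝ L) (h𝔪 : 𝔪 = 𝔪₀ ⊔ 𝔪')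
    (h𝔪'ne : 𝔪' ≠ ⊥)
    (h𝔪'irr : ∀ W : Submodule ℝ L, W ≤ 𝔪' →
      (∀ x ∈ 𝔨, ∀ v ∈ W, ⁅x, v⁆ ∈ W) → W = ⊥ ∨ W = 𝔪')
    (h𝔥notideal : ¬ (∀ x : L, ∀ v ∈ 𝔥, ⁅x, v⁆ ∈ 𝔥))
    (h𝔪₀notideal : ¬ (∀ x : L, ∀ v ∈ 𝔪₀, ⁅x, v⁆ ∈ 𝔪₀))
    (pr : L →ₗ[ℝ] L) (hpr : ∀ x : L, pr x ∈ 𝔪 ∧ x - pr x ∈ 𝔥)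
    (X : L) (hX : X ∈ 𝔪₀) (hXc : ∀ v ∈ 𝔪₀, ⁅X, v⁆ = 0) :
    ∀ α : L →ₗ[ℝ] L →ₗ[ℝ] ℝ, IsInvariantInnerOn 𝔥 𝔪 α →
      ∀ Z ∈ 𝔪, α (pr ⁅X, Z⁆) X = 0 := by
  intro α hα Z hZ
  obtain ⟨hαsymm, hαpos, hαinv⟩ := hα
  have hX𝔨 : X ∈ 𝔨 := ((h𝔪₀ X).1 hX).1
  have hX𝔥 : ∀ w ∈ 𝔥, B X w = 0 := ((h𝔪₀ X).1 hX).2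
  have hBzero : ∀ x : L, B x x = 0 → x = 0 := by
    intro x hx
    by_contra h
    exact absurd hx (ne_of_gt (hBpos x h))
  -- 𝔪' is 𝔨-invariant
  have h𝔪'inv : ∀ k ∈ 𝔨, ∀ v ∈ 𝔪', ⁅k, v⁆ ∈ 𝔪' := by
    intro k hk v hv
    rw [h𝔪'] at hv ⊢
    intro w hw
    have h1 := hBinv v w k
    have h2 : B v ⁅k, w⁆ = 0 := hv _ (h𝔨 k hk w hw)
    linarith
  -- ⁅w, X⁆ = 0 for w ∈ 𝔥
  have hbrX : ∀ w ∈ 𝔥, ⁅w, X⁆ = 0 := by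
    intro w hw
    have h1 : ⁅w, X⁆ ∈ 𝔥 := by
      have h := h𝔥ideal X hX𝔨 w hw
      have h' : -⁅X, w⁆ ∈ 𝔥 := 𝔥.neg_mem h
      rwa [lie_skew] at h'
    have h2 : B ⁅w, X⁆ ⁅w, X⁆ = 0 := by
      have h3 := hBinv X ⁅w, X⁆ w
      have h4 : B X ⁅w, ⁅w, X⁆⁆ = 0 :=
        hX𝔥 _ (h𝔥ideal w (h𝔥𝔨 hw) _ h1)
      linarith
    exact hBzero _ h2
  -- the span of ⁅𝔥, 𝔪'⁆
  set s : Set L := {z | ∃ w ∈ 𝔥, ∃ u ∈ 𝔪', z = ⁅w, u⁆} with hs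
  set W : Submodule ℝ L := Submodule.span ℝ s with hW
  have hW𝔪' : W ≤ 𝔪' := by
    rw [hW, Submodule.span_le]
    rintro z ⟨w, hw, u, hu, rfl⟩
    exact h𝔪'inv w (h𝔥𝔨 hw) u hu
  have hWinv : ∀ x ∈ 𝔨, ∀ v ∈ W, ⁅x, v⁆ ∈ W := by
    intro x hx v hv
    induction hv using Submodule.span_induction with
    | mem z hz =>
      obtain ⟨w, hw, u, hu, rfl⟩ := hz
      have key : ⁅x, ⁅w, u⁆⁆ = ⁅⁅x, w⁆, u⁆ + ⁅w, ⁅x, u⁆⁆ := by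
        rw [leibniz_lie]
      rw [key]
      exact W.add_mem
        (Submodule.subset_span ⟨⁅x, w⁆, h𝔥ideal x hx w hw, u, hu, rfl⟩)
        (Submodule.subset_span ⟨w, hw, ⁅x, u⁆, h𝔪'inv x hx u hu, rfl⟩)
    | zero => simpa using W.zero_mem
    | add a b _ _ ha hb => rw [lie_add]; exact W.add_mem ha hb
    | smul c a _ ha => rw [lie_smul]; exact W.smul_mem c ha
  have hWeq : W = 𝔪' := by
    rcases h𝔪'irr W hW𝔪' hWinv with hbot | htop
    · exfalso
      apply h𝔥notideal
      -- decompose L = 𝔨 ⊕ 𝔪'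
      have hrefl : B.IsRefl := fun x y h => by rw [hBsymm]; exact h
      have hnd : ((LinearMap.BilinForm.restrict B 𝔨)).Nondegenerate := by
        refine ⟨?_, ?_⟩ <;>
        intro x hx <;>
        have hxx : B (x : L) x = 0 := hx x <;>
        exact Subtype.ext (hBzero _ hxx)
      have hcompl := LinearMap.BilinForm.isCompl_orthogonal_of_restrict_nondegenerate
        (B := B) (W := 𝔨) hrefl hnd
      have hsup : 𝔨 ⊔ LinearMap.BilinForm.orthogonal B 𝔨 = ⊤ := hcompl.sup_eq_top
      have horth : LinearMap.BilinForm.orthogonal B 𝔨 ≤ 𝔪' := by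
        intro v hv
        rw [h𝔪']
        intro w hw
        rw [hBsymm]
        exact hv w hw
      intro x v hv
      have hx : x ∈ 𝔨 ⊔ LinearMap.BilinForm.orthogonal B 𝔨 := by rw [hsup]; exact Submodule.mem_top
      obtain ⟨k, hk, m, hm, rfl⟩ := Submodule.mem_sup.1 hx
      have h2 : ⁅m, v⁆ = 0 := by
        have hvm : ⁅v, m⁆ ∈ W := Submodule.subset_span ⟨v, hv, m, horth hm, rfl⟩
        rw [hbot, Submodule.mem_bot] at hvm
        have : ⁅m, v⁆ = -⁅v, m⁆ := (lie_skew m v).symm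
        rw [this, hvm, neg_zero]
      rw [add_lie, h2, add_zero]
      exact h𝔥ideal k hk v hv
    · exact htop
  -- decompose Z
  have h𝔪'𝔪 : 𝔪' ≤ 𝔪 := h𝔪 ▸ le_sup_right
  have h𝔪₀𝔪 : 𝔪₀ ≤ 𝔪 := h𝔪 ▸ le_sup_left
  rw [h𝔪, Submodule.mem_sup] at hZ
  obtain ⟨Z₀, hZ₀, Z', hZ', rfl⟩ := hZ
  have hy : ⁅X, Z₀ + Z'⁆ = ⁅X, Z'⁆ := by
    rw [lie_add, hXc Z₀ hZ₀, zero_add]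
  have hy𝔪' : ⁅X, Z'⁆ ∈ 𝔪' := h𝔪'inv X hX𝔨 Z' hZ'
  -- 𝔥 ∩ 𝔪 = 0
  have hdm : ∀ d ∈ 𝔪, d ∈ 𝔥 → d = 0 := by
    intro d hd hdh
    rw [h𝔪, Submodule.mem_sup] at hd
    obtain ⟨a, ha, b, hb, rfl⟩ := hd
    apply hBzero
    have h1 : B a (a + b) = 0 := ((h𝔪₀ a).1 ha).2 (a + b) hdh
    have h2 : B b (a + b) = 0 := (h𝔪' b).1 hb (a + b) (h𝔥𝔨 hdh)
    have hab : B (a + b) (a + b) = B a (a + b) + B b (a + b) := by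
      rw [show B (a + b) = B a + B b from map_add B a b, LinearMap.add_apply]
    rw [hab, h1, h2, add_zero]
  have hpry : pr ⁅X, Z'⁆ = ⁅X, Z'⁆ := by
    have h1 := (hpr ⁅X, Z'⁆).1
    have h2 := (hpr ⁅X, Z'⁆).2
    have h0 : ⁅X, Z'⁆ - pr ⁅X, Z'⁆ = 0 :=
      hdm _ (𝔪.sub_mem (h𝔪'𝔪 hy𝔪') h1) h2
    exact (sub_eq_zero.1 h0).symm
  have key : ∀ v ∈ W, α v X = 0 := by
    intro v hv
    induction hv using Submodule.span_induction with
    | mem z hz =>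
      obtain ⟨w, hw, u, hu, rfl⟩ := hz
      have h := hαinv w hw u (h𝔪'𝔪 hu) X (h𝔪₀𝔪 hX)
      rw [hbrX w hw] at h
      simpa using h
    | zero => simp
    | add a b _ _ ha hb => rw [map_add, LinearMap.add_apply, ha, hb, add_zero]
    | smul c a _ ha => rw [map_smul, LinearMap.smul_apply, ha, smul_zero]
  rw [hy, hpry]
  exact key _ (by rw [hWeq]; exact hy𝔪')
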